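/- Let Λ be a diamond domain, Δ = Δ(Λ) and i, j ∈ {+,−}. For every superimposed configuration η ∈ Ω^{SI,11}_Δ, the number of spin configurations σ ∈ Ω^{spin,ij}_Λ compatible with η equals 2^{k_Δ(η) − 2}, where k_Δ(η) = k_Δ(η⁰) + k_Δ(η¹) is the total number of clusters of η⁰ (in 𝕃) and of η¹ (in 𝕃*) containing a vertex incident to an edge of Δ. -/

import Mathlib

open MeasureTheory Filter Topology
open scoped ENNReal

namespace SixVertex

/-- Vertices of `ℤ²`. -/
abbrev Vx : Type := ℤ × ℤ
/-- Faces of `ℤ²`, i.e. elements of `(ℤ²)* = ℤ² + (1/2,1/2)`; the face `p` corresponds to the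
point `p + (1/2,1/2)`, i.e. to the unit square with corners `p`, `p+(1,0)`, `p+(0,1)`, `p+(1,1)`. -/
abbrev Face : Type := ℤ × ℤ

/-- `ℓ¹` (= graph) distance between faces in `(ℤ²)*`. -/
def fdist (p q : Face) : ℕ := (p.1 - q.1).natAbs + (p.2 - q.2).natAbs

/-- `ℓ¹` (= graph) distance between vertices of `ℤ²`. -/
def vdist (x y : Vx) : ℕ := (x.1 - y.1).natAbs + (x.2 - y.2).natAbs

/-- Adjacency in `ℤ²` (or in `(ℤ²)*`). -/
def VAdj (x y : Vx) : Prop := vdist x y = 1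

/-- The diagonal edges `E(𝕃) ∪ E(𝕃*)`, encoded as pairs `(x, b)` where `x ∈ ℤ²` is the vertex
of `ℤ²` the edge passes through, and `b` tells which of the two diagonals at `x` it is.
The cross at a vertex `x` consists of the two edges `(x, false)` and `(x, true)`. -/
abbrev Edge : Type := Vx × Bool

/-- The two endpoints (faces) of a diagonal edge: `(x, false)` joins the faces `x - (1,1)` and
`x` (the two faces at `x` of the parity of `x`), while `(x, true)` joins `x - (1,0)` and
`x - (0,1)`. -/
def ep (e : Edge) : Face × Face :=
  if e.2 then (e.1 - (1, 0), e.1 - (0, 1)) else (e.1 - (1, 1), e.1)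

/-- The edge `e` belongs to `E(𝕃)` (otherwise it belongs to `E(𝕃*)`). -/
def inL (e : Edge) : Prop := (Even (e.1.1 + e.1.2) ↔ e.2 = false)

/-- Configurations `η ∈ {0,1}^{E(𝕃) ∪ E(𝕃*)}` (the pair `(η⁰, η¹)` is encoded as a single
function on all diagonal edges). -/
abbrev SIConf : Type := Edge → Bool

/-- The cross at `x` is open in `η`. -/
def OpenCross (η : SIConf) (x : Vx) : Prop := η (x, false) = true ∧ η (x, true) = true

/-- No cross is closed in `η`, i.e. `η` is a superimposed configuration (`η ∈ Ω^SI`). -/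
def NoClosedCross (η : SIConf) : Prop := ∀ x : Vx, η (x, false) = true ∨ η (x, true) = true

/-- Two faces joined by an open edge of `η`. -/
def OpenAdj (η : SIConf) (p q : Face) : Prop :=
  ∃ e : Edge, η e = true ∧ (ep e = (p, q) ∨ ep e = (q, p))

/-- Connectivity by open paths. -/
def ConnectedIn (η : SIConf) : Face → Face → Prop := Relation.ReflTransGen (OpenAdj η)

/-- The cluster of the face `p` in `η`. -/
def cluster (η : SIConf) (p : Face) : Set Face := {q | ConnectedIn η p q}

/-- The face `p` is incident to some edge of `Δ`. -/
def TouchesDelta (Δ : Set Edge) (p : Face) : Prop := ∃ e ∈ Δ, (ep e).1 = p ∨ (ep e).2 = p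

/-- `N_Δ(η)`: the number of open crosses of `η` having an edge in `Δ`. -/
noncomputable def NDelta (Δ : Set Edge) (η : SIConf) : ℕ :=
  Set.ncard {x : Vx | OpenCross η x ∧ ((x, false) ∈ Δ ∨ (x, true) ∈ Δ)}

/-- `k_Δ(η) = k_Δ(η⁰) + k_Δ(η¹)`: the total number of clusters of `η` (equivalently, of `η⁰`
in `𝕃` plus those of `η¹` in `𝕃*`, since open edges never join faces of different parity)
containing a face incident to an edge of `Δ`. -/
noncomputable def kDelta (Δ : Set Edge) (η : SIConf) : ℕ :=
  Set.ncard {C : Set Face | ∃ p : Face, TouchesDelta Δ p ∧ C = cluster η p}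

/-- `η` is a superimposed configuration agreeing with `τ` off `Δ` (`η ∈ Ω^{SI,τ}_Δ`). -/
def SIok (Δ : Set Edge) (τ : SIConf) (η : SIConf) : Prop :=
  NoClosedCross η ∧ ∀ e ∉ Δ, η e = τ e

/-- The weight `α^{N_Δ(η)} q^{k_Δ(η)}` of the superimposed model. -/
noncomputable def SIweight (Δ : Set Edge) (α q : ℝ) (η : SIConf) : ℝ≥0∞ :=
  ENNReal.ofReal (α ^ NDelta Δ η * q ^ kDelta Δ η)

/-- The finite-volume superimposed measure `P^{SI,τ}_{Δ,α,q}`. -/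
noncomputable def SIfin (Δ : Set Edge) (α q : ℝ) (τ : SIConf) : Measure SIConf :=
  (∑' η : {η : SIConf // SIok Δ τ η}, SIweight Δ α q η.1)⁻¹ •
    Measure.sum (fun η : {η : SIConf // SIok Δ τ η} => SIweight Δ α q η.1 • Measure.dirac η.1)

/-- The all-open ("wired-wired", `11`) boundary condition. -/
def wiredwired : SIConf := fun _ => true

/-! ### Diamond domains -/

/-- The diamond `Λ = {u : dist(u,v) ≤ n}` of faces. -/
def diamond (v : Face) (n : ℕ) : Set Face := {u | fdist u v ≤ n}

/-- `(v, n)` determines a diamond domain: `v ∈ 𝕃` and `n` a positive even integer. -/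
def IsDiamond (v : Face) (n : ℕ) : Prop := Even (v.1 + v.2) ∧ 0 < n ∧ Even n

/-- The edge of `E(𝕃)` in the cross at `x`. -/
def LEdgeAt (x : Vx) : Edge := if Even (x.1 + x.2) then (x, false) else (x, true)

/-- `Δ(Λ)`: edges of `𝕃` with both endpoints in `Λ`, together with their dual edges
(equivalently: the full crosses whose `𝕃`-edge has both endpoints in `Λ`). -/
def deltaOf (v : Face) (n : ℕ) : Set Edge :=
  {e | (ep (LEdgeAt e.1)).1 ∈ diamond v n ∧ (ep (LEdgeAt e.1)).2 ∈ diamond v n}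

/-! ### Spin configurations -/

/-- Spin configurations on the faces; `true` is the spin `+`, `false` the spin `-`. -/
abbrev SpinConf : Type := Face → Bool

/-- The ice rule: at each vertex of `ℤ²`, at least one of the two diagonals consists of
equal spins. -/
def IceRule (σ : SpinConf) : Prop :=
  ∀ x : Vx, σ (x - (1, 1)) = σ x ∨ σ (x - (1, 0)) = σ (x - (0, 1))

/-- `x` is a saddle point of `σ`: both diagonals at `x` have constant spin. -/
def Saddle (σ : SpinConf) (x : Vx) : Prop :=
  σ (x - (1, 1)) = σ x ∧ σ (x - (1, 0)) = σ (x - (0, 1))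

/-- The face `p` is incident to the vertex `x` of `ℤ²` (i.e. `x` is a corner of `p`). -/
def FaceInc (p : Face) (x : Vx) : Prop :=
  ∃ a ∈ ({0, 1} : Set ℤ), ∃ b ∈ ({0, 1} : Set ℤ), p = x - (a, b)

/-- Vertices of `𝛬̂`: vertices of `ℤ²` on or inside the circuit `∂†Λ`, i.e. corners of
faces of `Λ`. -/
def HatVert (v : Face) (n : ℕ) (x : Vx) : Prop := ∃ p ∈ diamond v n, FaceInc p x

/-- Internal vertices of `𝛬̂`: vertices all of whose four incident `ℤ²`-edges belong to the
induced subgraph `𝛬̂`. -/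
def InternalVert (v : Face) (n : ℕ) (x : Vx) : Prop :=
  HatVert v n x ∧ ∀ y : Vx, VAdj x y → HatVert v n y

/-- `#saddle_Λ(σ)`: the number of saddle points of `σ` among internal vertices of `𝛬̂`. -/
noncomputable def saddleCount (v : Face) (n : ℕ) (σ : SpinConf) : ℕ :=
  Set.ncard {x : Vx | InternalVert v n x ∧ Saddle σ x}

/-- `Ω^{spin,ij}_Λ`: spin configurations satisfying the ice rule, equal to `i` on the outer
boundary of `Λ` and on all of `𝕃*` outside `Λ`, and equal to `j` on the inner boundary of `Λ`
and on all of `𝕃` outside `Λ`.  (All faces at distance `≥ n` from the center receive the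
boundary spin of their sublattice.) -/
def OmegaSpin (v : Face) (n : ℕ) (i j : Bool) (σ : SpinConf) : Prop :=
  IceRule σ ∧ ∀ p : Face, n ≤ fdist p v → σ p = (if Even (p.1 + p.2) then j else i)

/-- The weight `c^{#saddle_Λ(σ)}`. -/
noncomputable def spinWeight (v : Face) (n : ℕ) (c : ℝ) (σ : SpinConf) : ℝ≥0∞ :=
  ENNReal.ofReal (c ^ saddleCount v n σ)

/-- The finite-volume spin measure `P^{spin,ij}_{Λ,c}`. -/
noncomputable def spinFin (v : Face) (n : ℕ) (c : ℝ) (i j : Bool) : Measure SpinConf :=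
  (∑' σ : {σ : SpinConf // OmegaSpin v n i j σ}, spinWeight v n c σ.1)⁻¹ •
    Measure.sum (fun σ : {σ : SpinConf // OmegaSpin v n i j σ} =>
      spinWeight v n c σ.1 • Measure.dirac σ.1)

/-- Compatibility `σ ∼ η`: every open edge of `η` has endpoints with equal spins. -/
def Compat (σ : SpinConf) (η : SIConf) : Prop :=
  ∀ e : Edge, η e = true → σ (ep e).1 = σ (ep e).2

/-! ### Bernoulli site percolation on `ℤ²` and its critical probability -/

/-- `ν` is the law of i.i.d. Bernoulli(`p`) site percolation on `ℤ²`. -/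
def IsBernoulliField (p : ℝ) (ν : Measure (Vx → Bool)) : Prop :=
  IsProbabilityMeasure ν ∧
    ∀ (S : Finset Vx) (s : Vx → Bool),
      ν {ω | ∀ x ∈ S, ω x = s x} =
        ∏ x ∈ S, (if s x = true then ENNReal.ofReal p else ENNReal.ofReal (1 - p))

/-- Site-percolation adjacency: neighbouring open sites. -/
def SiteOpenAdj (ω : Vx → Bool) (x y : Vx) : Prop := VAdj x y ∧ ω x = true ∧ ω y = true

/-- The open cluster of a site. -/
def siteCluster (ω : Vx → Bool) (x : Vx) : Set Vx :=
  {y | Relation.ReflTransGen (SiteOpenAdj ω) x y}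

/-- The critical probability `p_c` of Bernoulli site percolation on `ℤ²`: the supremum of
`p ∈ [0,1]` for which Bernoulli(`p`) site percolation a.s. has no infinite open cluster. -/
noncomputable def pcSite : ℝ :=
  sSup {p : ℝ | 0 ≤ p ∧ p ≤ 1 ∧ ∀ ν : Measure (Vx → Bool), IsBernoulliField p ν →
    ν {ω | ∃ x, ω x = true ∧ (siteCluster ω x).Infinite} = 0}

/-! ### Infinite-volume limits -/

/-- A sequence of diamond domains increasing to `(ℤ²)*`. -/
def DiamondExhaustion (v : ℕ → Face) (n : ℕ → ℕ) : Prop :=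
  (∀ k, IsDiamond (v k) (n k)) ∧
  (∀ k, diamond (v k) (n k) ⊆ diamond (v (k + 1)) (n (k + 1))) ∧
  (∀ u : Face, ∃ k, u ∈ diamond (v k) (n k))

/-- `P` is the weak limit of the finite-volume superimposed measures with boundary condition
`τ` along any sequence of diamond domains increasing to `(ℤ²)*`. -/
def IsSILimitFor (α q : ℝ) (τ : SIConf) (P : Measure SIConf) : Prop :=
  ∀ (v : ℕ → Face) (n : ℕ → ℕ), DiamondExhaustion v n →
    ∀ f : SIConf → ℝ, Continuous f → (∃ M, ∀ η, |f η| ≤ M) →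
      Tendsto (fun k => ∫ η, f η ∂(SIfin (deltaOf (v k) (n k)) α q τ)) atTop
        (nhds (∫ η, f η ∂P))

/-- `P` is the infinite-volume superimposed measure `P^{SI}_{α,q}`: the common weak limit of
the finite-volume measures over all boundary conditions. -/
def IsSILimit (α q : ℝ) (P : Measure SIConf) : Prop :=
  IsProbabilityMeasure P ∧ ∀ τ : SIConf, NoClosedCross τ → IsSILimitFor α q τ P

/-- `P` is the weak limit `P^{spin,ij}_c` of the finite-volume spin measures along any
sequence of diamond domains increasing to `(ℤ²)*`. -/
def IsSpinLimit (c : ℝ) (i j : Bool) (P : Measure SpinConf) : Prop :=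
  IsProbabilityMeasure P ∧
    ∀ (v : ℕ → Face) (n : ℕ → ℕ), DiamondExhaustion v n →
      ∀ f : SpinConf → ℝ, Continuous f → (∃ M, ∀ σ, |f σ| ≤ M) →
        Tendsto (fun k => ∫ σ, f σ ∂(spinFin (v k) (n k) c i j)) atTop (nhds (∫ σ, f σ ∂P))

end SixVertex

namespace SixVertex

section Aux
variable {η : SIConf}

lemma openAdj_symm {p q : Face} (h : OpenAdj η p q) : OpenAdj η q p := by
  obtain ⟨e, he, h⟩ := h; exact ⟨e, he, h.symm⟩

lemma connectedIn_symm {p q : Face} (h : ConnectedIn η p q) : ConnectedIn η q p :=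
  haveI : Std.Symm (OpenAdj η) := ⟨fun _ _ => openAdj_symm⟩
  Std.Symm.symm (r := Relation.ReflTransGen (OpenAdj η)) _ _ h

lemma mem_cluster_self (p : Face) : p ∈ cluster η p := Relation.ReflTransGen.refl

lemma cluster_eq_of_conn {p q : Face} (h : ConnectedIn η p q) : cluster η p = cluster η q := by
  ext r
  exact ⟨fun hr => Relation.ReflTransGen.trans (connectedIn_symm h) hr,
         fun hr => Relation.ReflTransGen.trans h hr⟩

lemma compat_eq_of_conn {σ : SpinConf} (hσ : Compat σ η) {p q : Face}
    (h : ConnectedIn η p q) : σ p = σ q := by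
  induction h with
  | refl => rfl
  | tail _ hbc ih =>
    obtain ⟨e, he, hpq⟩ := hbc
    have hs := hσ e he
    rcases hpq with h' | h' <;> rw [Prod.ext_iff] at h'
    · rw [h'.1, h'.2] at hs; rw [ih]; simpa using hs
    · rw [h'.1, h'.2] at hs; rw [ih]; simpa using hs.symm


lemma parity_of_openAdj {p q : Face} (h : OpenAdj η p q) :
    (Even (p.1 + p.2) ↔ Even (q.1 + q.2)) := by
  obtain ⟨⟨x, b⟩, -, h⟩ := h
  rcases h with h | h <;> cases b <;>
    simp only [ep, if_true, if_false, Bool.false_eq_true, Prod.mk.injEq, Prod.ext_iff,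
      Prod.fst_sub, Prod.snd_sub] at h <;>
    obtain ⟨⟨h1, h2⟩, h3, h4⟩ := h <;>
    rw [Int.even_iff, Int.even_iff] <;> omega

lemma parity_of_conn {p q : Face} (h : ConnectedIn η p q) :
    (Even (p.1 + p.2) ↔ Even (q.1 + q.2)) := by
  induction h with
  | refl => rfl
  | tail _ hbc ih => exact ih.trans (parity_of_openAdj hbc)

lemma mem_delta_iff {v : Face} {n : ℕ} (x : Vx) (b : Bool) (hx : Even (x.1 + x.2)) :
    ((x, b) ∈ deltaOf v n) ↔ (fdist (x - (1,1)) v ≤ n ∧ fdist x v ≤ n) := by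
  simp only [deltaOf, Set.mem_setOf_eq, LEdgeAt, diamond]
  rw [if_pos hx]
  simp [ep]

lemma mem_delta_iff' {v : Face} {n : ℕ} (x : Vx) (b : Bool) (hx : ¬ Even (x.1 + x.2)) :
    ((x, b) ∈ deltaOf v n) ↔ (fdist (x - (1,0)) v ≤ n ∧ fdist (x - (0,1)) v ≤ n) := by
  simp only [deltaOf, Set.mem_setOf_eq, LEdgeAt, diamond]
  rw [if_neg hx]
  simp [ep]

lemma touches_of_small {v : Face} {n : ℕ} (hv : Even (v.1 + v.2)) (hn : Even n) {p : Face}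
    (hp : fdist p v < n) : TouchesDelta (deltaOf v n) p := by
  rw [Int.even_iff] at hv
  rw [Nat.even_iff] at hn
  simp only [fdist] at hp
  rcases Int.even_or_odd (p.1 + p.2) with hpe | hpo
  · rw [Int.even_iff] at hpe
    refine ⟨(p + (1,1), false), ?_, Or.inl ?_⟩
    · rw [mem_delta_iff _ _ (by rw [Int.even_iff]; simp only [Prod.fst_add, Prod.snd_add]; omega)]
      constructor <;> simp only [fdist, Prod.fst_sub, Prod.snd_sub, Prod.fst_add, Prod.snd_add] <;>
        omega
    · simp [ep, Prod.ext_iff]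
  · rw [Int.odd_iff] at hpo
    refine ⟨(p, false), ?_, Or.inr ?_⟩
    · rw [mem_delta_iff' _ _ (by rw [Int.even_iff]; omega)]
      constructor <;> simp only [fdist, Prod.fst_sub, Prod.snd_sub] <;> omega
    · simp [ep]

lemma touches_bound {v : Face} {n : ℕ} {p : Face} (h : TouchesDelta (deltaOf v n) p) :
    fdist p v ≤ n + 2 := by
  obtain ⟨⟨x, b⟩, hmem, hp⟩ := h
  rcases Int.even_or_odd (x.1 + x.2) with hx | hx
  · rw [mem_delta_iff _ _ hx] at hmem
    obtain ⟨h1, h2⟩ := hmem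
    simp only [fdist, Prod.fst_sub, Prod.snd_sub] at h1 h2 ⊢
    rcases hp with hp | hp <;> cases b <;> simp only [ep, if_true, if_false, Bool.false_eq_true] at hp <;>
      (rw [← hp]; (try simp only [Prod.fst_sub, Prod.snd_sub]); omega)
  · rw [mem_delta_iff' _ _ (by simpa [Int.even_iff, Int.odd_iff] using hx)] at hmem
    obtain ⟨h1, h2⟩ := hmem
    simp only [fdist, Prod.fst_sub, Prod.snd_sub] at h1 h2 ⊢
    rcases hp with hp | hp <;> cases b <;> simp only [ep, if_true, if_false, Bool.false_eq_true] at hp <;>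
      (rw [← hp]; (try simp only [Prod.fst_sub, Prod.snd_sub]); omega)

lemma notMem_delta {v : Face} {n : ℕ} (x : Vx) (b : Bool)
    (h1 : ¬(fdist (x - (1,1)) v ≤ n ∧ fdist x v ≤ n))
    (h2 : ¬(fdist (x - (1,0)) v ≤ n ∧ fdist (x - (0,1)) v ≤ n)) : (x, b) ∉ deltaOf v n := by
  rcases Int.even_or_odd (x.1 + x.2) with hx | hx
  · rw [mem_delta_iff _ _ hx]; exact h1
  · rw [mem_delta_iff' _ _ (by rw [Int.odd_iff] at hx; rw [Int.even_iff]; omega)]; exact h2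

lemma eta_open {v : Face} {n : ℕ} {η : SIConf} (hη : SIok (deltaOf v n) wiredwired η)
    {e : Edge} (he : e ∉ deltaOf v n) : η e = true := hη.2 e he

lemma openAdj_far {v : Face} {n : ℕ} {η : SIConf} (hη : SIok (deltaOf v n) wiredwired η)
    {p q : Face} (hd1 : q.1 = p.1 + 1 ∨ q.1 = p.1 - 1) (hd2 : q.2 = p.2 + 1 ∨ q.2 = p.2 - 1)
    (hfar : 2 * n + 2 ≤ fdist p v + fdist q v) : OpenAdj η p q := by
  simp only [fdist] at hfar
  rcases hd1 with h1 | h1 <;> rcases hd2 with h2 | h2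
  · refine ⟨((p.1 + 1, p.2 + 1), false), eta_open hη (notMem_delta _ _ ?_ ?_),
      Or.inl (by simp [ep, Prod.ext_iff]; omega)⟩ <;>
      simp only [fdist, Prod.fst_sub, Prod.snd_sub] <;> omega
  · refine ⟨((p.1 + 1, p.2), true), eta_open hη (notMem_delta _ _ ?_ ?_),
      Or.inl (by simp [ep, Prod.ext_iff]; omega)⟩ <;>
      simp only [fdist, Prod.fst_sub, Prod.snd_sub] <;> omega
  · refine ⟨((p.1, p.2 + 1), true), eta_open hη (notMem_delta _ _ ?_ ?_),
      Or.inr (by simp [ep, Prod.ext_iff]; omega)⟩ <;>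
      simp only [fdist, Prod.fst_sub, Prod.snd_sub] <;> omega
  · refine ⟨((p.1, p.2), false), eta_open hη (notMem_delta _ _ ?_ ?_),
      Or.inr (by simp [ep, Prod.ext_iff]; omega)⟩ <;>
      simp only [fdist, Prod.fst_sub, Prod.snd_sub] <;> omega

def RGen (P : ℤ × ℤ → Prop) (a b : ℤ × ℤ) : Prop :=
  P a ∧ P b ∧ ((a.1 = b.1 ∧ (a.2 = b.2 + 1 ∨ b.2 = a.2 + 1)) ∨
    (a.2 = b.2 ∧ (a.1 = b.1 + 1 ∨ b.1 = a.1 + 1)))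

lemma connP_symm {P : ℤ × ℤ → Prop} {a b : ℤ × ℤ} (h : Relation.ReflTransGen (RGen P) a b) :
    Relation.ReflTransGen (RGen P) b a :=
  haveI : Std.Symm (RGen P) := ⟨fun _ _ hxy => ⟨hxy.2.1, hxy.1, by have := hxy.2.2; omega⟩⟩
  Std.Symm.symm _ _ h

lemma hlineN (P : ℤ × ℤ → Prop) (t s : ℤ) (k : ℕ) (h : ∀ u : ℤ, s ≤ u → u ≤ s + k → P (u, t)) :
    Relation.ReflTransGen (RGen P) (s, t) (s + k, t) := by
  induction k with
  | zero => simp only [Nat.cast_zero, add_zero]; exact .refl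
  | succ k ih =>
    refine (ih (fun u hu hu' => h u hu (by push_cast at hu' ⊢; omega))).tail
      ⟨h _ (by omega) (by push_cast; omega), h _ (by push_cast; omega) (by push_cast; omega),
        Or.inr ⟨rfl, Or.inr (by push_cast; ring)⟩⟩

lemma vlineN (P : ℤ × ℤ → Prop) (s t : ℤ) (k : ℕ) (h : ∀ u : ℤ, t ≤ u → u ≤ t + k → P (s, u)) :
    Relation.ReflTransGen (RGen P) (s, t) (s, t + k) := by
  induction k with
  | zero => simp only [Nat.cast_zero, add_zero]; exact .refl
  | succ k ih =>
    refine (ih (fun u hu hu' => h u hu (by push_cast at hu' ⊢; omega))).tail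
      ⟨h _ (by omega) (by push_cast; omega), h _ (by push_cast; omega) (by push_cast; omega),
        Or.inl ⟨rfl, Or.inr (by push_cast; ring)⟩⟩

lemma hlineG (P : ℤ × ℤ → Prop) (t s s' : ℤ) (h : ∀ u : ℤ, min s s' ≤ u → u ≤ max s s' → P (u, t)) :
    Relation.ReflTransGen (RGen P) (s, t) (s', t) := by
  rcases le_total s s' with hss | hss
  · have : s' = s + ((s' - s).toNat : ℤ) := by omega
    rw [this]
    exact hlineN P t s _ (fun u hu hu' => h u (by omega) (by omega))
  · have : s = s' + ((s - s').toNat : ℤ) := by omega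
    rw [this]
    exact connP_symm (hlineN P t s' _ (fun u hu hu' => h u (by omega) (by omega)))

lemma vlineG (P : ℤ × ℤ → Prop) (s t t' : ℤ) (h : ∀ u : ℤ, min t t' ≤ u → u ≤ max t t' → P (s, u)) :
    Relation.ReflTransGen (RGen P) (s, t) (s, t') := by
  rcases le_total t t' with hss | hss
  · have : t' = t + ((t' - t).toNat : ℤ) := by omega
    rw [this]
    exact vlineN P s t _ (fun u hu hu' => h u (by omega) (by omega))
  · have : t = t' + ((t - t').toNat : ℤ) := by omega
    rw [this]
    exact connP_symm (vlineN P s t' _ (fun u hu hu' => h u (by omega) (by omega)))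

def OutB (lo hi : ℤ) (a : ℤ × ℤ) : Prop := ¬(lo ≤ a.1 ∧ a.1 ≤ hi ∧ lo ≤ a.2 ∧ a.2 ≤ hi)

lemma out_conn_canon (lo hi : ℤ) {a : ℤ × ℤ} (ha : OutB lo hi a) :
    Relation.ReflTransGen (RGen (OutB lo hi)) a (hi + 1, lo) := by
  obtain ⟨s, t⟩ := a
  simp only [OutB] at ha
  have hout : ∀ u w : ℤ, (hi < u ∨ u < lo ∨ hi < w ∨ w < lo) → OutB lo hi (u, w) := by
    intro u w hw; simp only [OutB]; omega
  rcases lt_or_ge hi s with h1 | h1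
  · exact (vlineG _ s t lo (fun u _ _ => hout s u (by omega))).trans
      (hlineG _ lo s (hi + 1) (fun u hu hu' => hout u lo (by omega)))
  rcases lt_or_ge s lo with h2 | h2
  · exact ((vlineG _ s t (lo - 1) (fun u _ _ => hout s u (by omega))).trans
      (hlineG _ (lo - 1) s (hi + 1) (fun u hu hu' => hout u (lo - 1) (by omega)))).trans
      (vlineG _ (hi + 1) (lo - 1) lo (fun u _ _ => hout (hi + 1) u (by omega)))
  rcases lt_or_ge hi t with h3 | h3
  · exact (hlineG _ t s (hi + 1) (fun u _ _ => hout u t (by omega))).trans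
      (vlineG _ (hi + 1) t lo (fun u hu hu' => hout (hi + 1) u (by omega)))
  rcases lt_or_ge t lo with h4 | h4
  · exact (hlineG _ t s (hi + 1) (fun u _ _ => hout u t (by omega))).trans
      (vlineG _ (hi + 1) t lo (fun u hu hu' => hout (hi + 1) u (by omega)))
  · exact absurd ⟨h2, h1, h4, h3⟩ ha

lemma out_conn (lo hi : ℤ) {a b : ℤ × ℤ} (ha : OutB lo hi a) (hb : OutB lo hi b) :
    Relation.ReflTransGen (RGen (OutB lo hi)) a b :=
  (out_conn_canon lo hi ha).trans (connP_symm (out_conn_canon lo hi hb))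

lemma conn_lift_even {v : Face} {n m : ℕ} {η : SIConf} (hη : SIok (deltaOf v n) wiredwired η)
    (hm : n = m + m) {a b : ℤ × ℤ}
    (h : Relation.ReflTransGen (RGen (OutB (-(m : ℤ)) m)) a b) :
    ConnectedIn η (v + (a.1 + a.2, a.1 - a.2)) (v + (b.1 + b.2, b.1 - b.2)) := by
  refine Relation.ReflTransGen.lift (fun a : ℤ × ℤ => (v + (a.1 + a.2, a.1 - a.2) : Face)) ?_ _ _ h
  rintro x y ⟨hx, hy, hstep⟩
  simp only [OutB] at hx hy
  refine openAdj_far hη ?_ ?_ ?_ <;>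
    simp only [fdist, Prod.fst_add, Prod.snd_add] <;> omega

lemma conn_lift_odd {v : Face} {n m : ℕ} {η : SIConf} (hη : SIok (deltaOf v n) wiredwired η)
    (hm : n = m + m) {a b : ℤ × ℤ}
    (h : Relation.ReflTransGen (RGen (OutB (-(m : ℤ)) ((m : ℤ) - 1))) a b) :
    ConnectedIn η (v + (a.1 + a.2 + 1, a.1 - a.2)) (v + (b.1 + b.2 + 1, b.1 - b.2)) := by
  refine Relation.ReflTransGen.lift
    (fun a : ℤ × ℤ => (v + (a.1 + a.2 + 1, a.1 - a.2) : Face)) ?_ _ _ h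
  rintro x y ⟨hx, hy, hstep⟩
  simp only [OutB] at hx hy
  refine openAdj_far hη ?_ ?_ ?_ <;>
    simp only [fdist, Prod.fst_add, Prod.snd_add] <;> omega

lemma coords_even {v p : Face} (hv : Even (v.1 + v.2)) (hp : Even (p.1 + p.2)) :
    ∃ a : ℤ × ℤ, p = v + (a.1 + a.2, a.1 - a.2) := by
  obtain ⟨c, hc⟩ := hp; obtain ⟨d, hd⟩ := hv
  refine ⟨(c - d, c - d - p.2 + v.2), Prod.ext_iff.mpr ⟨?_, ?_⟩⟩ <;>
    simp only [Prod.fst_add, Prod.snd_add] <;> omega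

lemma coords_odd {v p : Face} (hv : Even (v.1 + v.2)) (hp : ¬ Even (p.1 + p.2)) :
    ∃ a : ℤ × ℤ, p = v + (a.1 + a.2 + 1, a.1 - a.2) := by
  obtain ⟨c, hc⟩ := Int.not_even_iff_odd.mp hp
  obtain ⟨d, hd⟩ := hv
  refine ⟨(c - d, c - d - p.2 + v.2), Prod.ext_iff.mpr ⟨?_, ?_⟩⟩ <;>
    simp only [Prod.fst_add, Prod.snd_add] <;> omega

lemma hop {v : Face} {n : ℕ} {η : SIConf} (hη : SIok (deltaOf v n) wiredwired η) {p : Face}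
    (hfar : n ≤ fdist p v) :
    ∃ q : Face, OpenAdj η p q ∧ fdist q v = fdist p v + 2 ∧
      (Even (q.1 + q.2) ↔ Even (p.1 + p.2)) := by
  simp only [fdist] at hfar
  by_cases h1 : v.1 ≤ p.1 <;> by_cases h2 : v.2 ≤ p.2
  · refine ⟨(p.1 + 1, p.2 + 1), openAdj_far hη (Or.inl rfl) (Or.inl rfl) ?_, ?_, ?_⟩
    · simp only [fdist]; omega
    · simp only [fdist]; omega
    · rw [Int.even_iff, Int.even_iff]; omega
  · refine ⟨(p.1 + 1, p.2 - 1), openAdj_far hη (Or.inl rfl) (Or.inr rfl) ?_, ?_, ?_⟩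
    · simp only [fdist]; omega
    · simp only [fdist]; omega
    · rw [Int.even_iff, Int.even_iff]; omega
  · refine ⟨(p.1 - 1, p.2 + 1), openAdj_far hη (Or.inr rfl) (Or.inl rfl) ?_, ?_, ?_⟩
    · simp only [fdist]; omega
    · simp only [fdist]; omega
    · rw [Int.even_iff, Int.even_iff]; omega
  · refine ⟨(p.1 - 1, p.2 - 1), openAdj_far hη (Or.inr rfl) (Or.inr rfl) ?_, ?_, ?_⟩
    · simp only [fdist]; omega
    · simp only [fdist]; omega
    · rw [Int.even_iff, Int.even_iff]; omega

lemma far_conn_even {v : Face} {n : ℕ} {η : SIConf} (hη : SIok (deltaOf v n) wiredwired η)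
    (hv : Even (v.1 + v.2)) (hn : Even n) {p : Face} (hp : Even (p.1 + p.2))
    (hfar : n ≤ fdist p v) : ConnectedIn η p (v + ((n : ℤ), 0)) := by
  obtain ⟨m, hm⟩ := hn
  have hpen : fdist (v + ((n : ℤ), 0)) v = n := by
    simp only [fdist, Prod.fst_add, Prod.snd_add]; omega
  obtain ⟨q, hpq, hqd, hqpar⟩ := hop hη hfar
  obtain ⟨q', hpq', hqd', hqpar'⟩ := hop hη (le_of_eq hpen.symm)
  have hq : Even (q.1 + q.2) := hqpar.mpr hp
  have hq' : Even (q'.1 + q'.2) := by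
    refine hqpar'.mpr ?_
    rw [Int.even_iff] at hv ⊢
    simp only [Prod.fst_add, Prod.snd_add]
    omega
  obtain ⟨a, ha⟩ := coords_even hv hq
  obtain ⟨b, hb⟩ := coords_even hv hq'
  rw [hpen] at hqd'
  subst ha hb
  simp only [fdist, Prod.fst_add, Prod.snd_add] at hqd hqd' hfar
  have hconn : ConnectedIn η (v + (a.1 + a.2, a.1 - a.2)) (v + (b.1 + b.2, b.1 - b.2)) := by
    refine conn_lift_even hη hm (out_conn _ _ ?_ ?_) <;> simp only [OutB] <;> omega
  exact ((Relation.ReflTransGen.single hpq).trans hconn).trans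
    (connectedIn_symm (Relation.ReflTransGen.single hpq'))

lemma far_conn_odd {v : Face} {n : ℕ} {η : SIConf} (hη : SIok (deltaOf v n) wiredwired η)
    (hv : Even (v.1 + v.2)) (hn : Even n) {p : Face} (hp : ¬ Even (p.1 + p.2))
    (hfar : n ≤ fdist p v) : ConnectedIn η p (v + ((n : ℤ), 1)) := by
  obtain ⟨m, hm⟩ := hn
  have hpo : ¬ Even ((v + ((n : ℤ), 1)).1 + (v + ((n : ℤ), 1)).2) := by
    rw [Int.even_iff] at hv ⊢
    simp only [Prod.fst_add, Prod.snd_add]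
    omega
  obtain ⟨a, ha⟩ := coords_odd hv hp
  obtain ⟨b, hb⟩ := coords_odd hv hpo
  have hppar : (p.1 + p.2) % 2 = 1 := by
    rw [Int.even_iff] at hp; omega
  have hvpar : (v.1 + v.2) % 2 = 0 := Int.even_iff.mp hv
  have hfar2 : n + 1 ≤ fdist p v := by
    simp only [fdist] at hfar ⊢
    omega
  have hb' : fdist (v + ((n : ℤ), 1)) v = n + 1 := by
    simp only [fdist, Prod.fst_add, Prod.snd_add]; omega
  rw [ha] at hfar2
  rw [ha, hb]
  rw [hb] at hb'
  simp only [fdist, Prod.fst_add, Prod.snd_add] at hfar2 hb'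
  refine conn_lift_odd hη hm (out_conn _ _ ?_ ?_) <;> simp only [OutB] <;> omega

lemma iceRule_of_compat {η : SIConf} {σ : SpinConf} (hnc : NoClosedCross η)
    (hc : Compat σ η) : IceRule σ := by
  intro x
  rcases hnc x with h | h
  · left; have := hc _ h; simpa [ep] using this
  · right; have := hc _ h; simpa [ep] using this

end Aux

/-- Let `Λ` be a diamond domain, `Δ = Δ(Λ)` and `i, j ∈ {+,-}`.  For every superimposed
configuration `η ∈ Ω^{SI,11}_Δ`, the number of spin configurations `σ ∈ Ω^{spin,ij}_Λ`
compatible with `η` equals `2^{k_Δ(η) - 2}`. -/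
theorem stmt_11 (v : Face) (n : ℕ) (hΛ : IsDiamond v n) (i j : Bool)
    (η : SIConf) (hη : SIok (deltaOf v n) wiredwired η) :
    Set.ncard {σ : SpinConf | OmegaSpin v n i j σ ∧ Compat σ η} =
      2 ^ (kDelta (deltaOf v n) η - 2) := by
  classical
  obtain ⟨hv, hnpos, hneven⟩ := hΛ
  have hvpar : (v.1 + v.2) % 2 = 0 := Int.even_iff.mp hv
  have hnpar : n % 2 = 0 := Nat.even_iff.mp hneven
  set Δ : Set Edge := deltaOf v n with hΔ
  set pe : Face := v + ((n : ℤ), 0) with hpe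
  set po : Face := v + ((n : ℤ), 1) with hpo
  have hpe_par : Even (pe.1 + pe.2) := by
    rw [hpe, Int.even_iff]; simp only [Prod.fst_add, Prod.snd_add]; omega
  have hpo_par : ¬ Even (po.1 + po.2) := by
    rw [hpo, Int.even_iff]; simp only [Prod.fst_add, Prod.snd_add]; omega
  have hpe_d : n ≤ fdist pe v := by
    simp only [hpe, fdist, Prod.fst_add, Prod.snd_add]; omega
  have hpo_d : n ≤ fdist po v := by
    simp only [hpo, fdist, Prod.fst_add, Prod.snd_add]; omega
  have hpe_touch : TouchesDelta Δ pe := by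
    refine ⟨(pe, false), ?_, Or.inr (by simp [ep])⟩
    rw [hΔ, mem_delta_iff _ _ hpe_par]
    constructor <;>
      simp only [hpe, fdist, Prod.fst_sub, Prod.snd_sub, Prod.fst_add, Prod.snd_add] <;> omega
  have hpo_touch : TouchesDelta Δ po := by
    refine ⟨(po, false), ?_, Or.inr (by simp [ep])⟩
    rw [hΔ, mem_delta_iff' _ _ hpo_par]
    constructor <;>
      simp only [hpo, fdist, Prod.fst_sub, Prod.snd_sub, Prod.fst_add, Prod.snd_add] <;> omega
  set K : Set (Set Face) := {C | ∃ p, TouchesDelta Δ p ∧ C = cluster η p} with hKdef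
  have memK : ∀ {C : Set Face}, C ∈ K → ∃ p, TouchesDelta Δ p ∧ C = cluster η p := fun h => h
  have mkK : ∀ {p : Face}, TouchesDelta Δ p → cluster η p ∈ K := fun h => ⟨_, h, rfl⟩
  have hCe : cluster η pe ∈ K := mkK hpe_touch
  have hCo : cluster η po ∈ K := mkK hpo_touch
  have hKfin : K.Finite := by
    have himg : K = (cluster η) '' {p | TouchesDelta Δ p} := by
      ext C
      constructor
      · rintro ⟨p, hp, rfl⟩; exact ⟨p, hp, rfl⟩
      · rintro ⟨p, hp, rfl⟩; exact ⟨p, hp, rfl⟩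
    rw [himg]
    refine Set.Finite.image _ (Set.Finite.subset
      (Set.finite_Icc (v - ((n : ℤ) + 2, (n : ℤ) + 2)) (v + ((n : ℤ) + 2, (n : ℤ) + 2))) ?_)
    intro p hp
    have hb := touches_bound hp
    simp only [fdist] at hb
    simp only [Set.mem_Icc, Prod.le_def, Prod.fst_sub, Prod.snd_sub, Prod.fst_add, Prod.snd_add]
    omega
  haveI : Fintype ↥K := hKfin.fintype
  set A : ↥K := ⟨cluster η pe, hCe⟩ with hA
  set B : ↥K := ⟨cluster η po, hCo⟩ with hB
  have hAB : A ≠ B := by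
    intro hEq
    have h1 : cluster η pe = cluster η po := congrArg Subtype.val hEq
    have h2 : pe ∈ cluster η po := by rw [← h1]; exact mem_cluster_self pe
    exact hpo_par ((parity_of_conn (h2 : ConnectedIn η po pe)).mpr hpe_par)
  set S : Set SpinConf := {σ : SpinConf | OmegaSpin v n i j σ ∧ Compat σ η} with hS
  have hbval : ∀ {σ : SpinConf}, σ ∈ S → ∀ {p : Face}, n ≤ fdist p v →
      σ p = (if Even (p.1 + p.2) then j else i) := fun {σ} hσ {p} hp => hσ.1.2 p hp
  have hconst : ∀ {σ : SpinConf}, σ ∈ S → ∀ {p q : Face}, ConnectedIn η p q → σ p = σ q :=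
    fun {σ} hσ {p q} h => compat_eq_of_conn hσ.2 h
  have hσpe : ∀ {σ : SpinConf}, σ ∈ S → σ pe = j := fun hσ => by
    rw [hbval hσ hpe_d, if_pos hpe_par]
  have hσpo : ∀ {σ : SpinConf}, σ ∈ S → σ po = i := fun hσ => by
    rw [hbval hσ hpo_d, if_neg hpo_par]
  have main : Nat.card ↥S = Nat.card {f : ↥K → Bool // f A = j ∧ f B = i} := by
    refine Nat.card_congr
      ⟨fun σ => ⟨fun C => σ.1 (memK C.2).choose, ?_, ?_⟩,
       fun f => ⟨fun p => if h : cluster η p ∈ K then f.1 ⟨cluster η p, h⟩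
                  else if Even (p.1 + p.2) then j else i, ?_⟩,
       ?_, ?_⟩
    · -- value on A is j
      show σ.1 (memK A.2).choose = j
      have hs := (memK A.2).choose_spec
      have hconn : ConnectedIn η (memK A.2).choose pe := by
        have hx : pe ∈ cluster η (memK A.2).choose := by
          rw [← hs.2]; exact mem_cluster_self pe
        exact hx
      rw [hconst σ.2 hconn, hσpe σ.2]
    · -- value on B is i
      show σ.1 (memK B.2).choose = i
      have hs := (memK B.2).choose_spec
      have hconn : ConnectedIn η (memK B.2).choose po := by
        have hx : po ∈ cluster η (memK B.2).choose := by
          rw [← hs.2]; exact mem_cluster_self po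
        exact hx
      rw [hconst σ.2 hconn, hσpo σ.2]
    · -- membership of the inverse map
      have hcomp : Compat (fun p => if h : cluster η p ∈ K then f.1 ⟨cluster η p, h⟩
          else if Even (p.1 + p.2) then j else i) η := by
        intro e he
        have hadj : OpenAdj η (ep e).1 (ep e).2 := ⟨e, he, Or.inl rfl⟩
        have hcl : cluster η (ep e).1 = cluster η (ep e).2 :=
          cluster_eq_of_conn (Relation.ReflTransGen.single hadj)
        have hpar : (Even ((ep e).1.1 + (ep e).1.2)) = (Even ((ep e).2.1 + (ep e).2.2)) :=
          propext (parity_of_openAdj hadj)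
        simp only [hcl, hpar]
      refine ⟨⟨iceRule_of_compat hη.1 hcomp, ?_⟩, hcomp⟩
      intro p hp
      dsimp only
      by_cases h : cluster η p ∈ K
      · rw [dif_pos h]
        by_cases hpar : Even (p.1 + p.2)
        · rw [if_pos hpar]
          have hcl : cluster η p = cluster η pe :=
            cluster_eq_of_conn (far_conn_even hη hv hneven hpar hp)
          have hsub : (⟨cluster η p, h⟩ : ↥K) = A := Subtype.ext hcl
          rw [hsub, f.2.1]
        · rw [if_neg hpar]
          have hcl : cluster η p = cluster η po :=
            cluster_eq_of_conn (far_conn_odd hη hv hneven hpar hp)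
          have hsub : (⟨cluster η p, h⟩ : ↥K) = B := Subtype.ext hcl
          rw [hsub, f.2.2]
      · rw [dif_neg h]
    · -- left inverse
      rintro ⟨σ, hσ⟩
      refine Subtype.ext (funext fun p => ?_)
      dsimp only
      by_cases h : cluster η p ∈ K
      · rw [dif_pos h]
        have hs := (memK h).choose_spec
        have hconn : ConnectedIn η (memK h).choose p := by
          have hx : p ∈ cluster η (memK h).choose := by
            rw [← hs.2]; exact mem_cluster_self p
          exact hx
        exact hconst hσ hconn
      · rw [dif_neg h]
        have hfar : n ≤ fdist p v := by
          by_contra hlt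
          exact h (mkK (touches_of_small hv hneven (by omega)))
        exact (hbval hσ hfar).symm
    · -- right inverse
      rintro ⟨f, hf1, hf2⟩
      refine Subtype.ext (funext fun C => ?_)
      have hs := (memK C.2).choose_spec
      have hmem : cluster η (memK C.2).choose ∈ K := by rw [← hs.2]; exact C.2
      show (if h : cluster η (memK C.2).choose ∈ K
          then f ⟨cluster η (memK C.2).choose, h⟩ else _) = f C
      rw [dif_pos hmem]
      exact congrArg f (Subtype.ext hs.2.symm)
  have e2 : {f : ↥K → Bool // f A = j ∧ f B = i} ≃ ({C : ↥K // C ≠ A ∧ C ≠ B} → Bool) := by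
    refine ⟨fun f C => f.1 C.1,
      fun g => ⟨fun C => if h : C = A then j else if h' : C = B then i else g ⟨C, h, h'⟩, ?_, ?_⟩,
      ?_, ?_⟩
    · dsimp only
      rw [dif_pos rfl]
    · dsimp only
      rw [dif_neg (show B ≠ A from fun hEq => hAB hEq.symm), dif_pos rfl]
    · rintro ⟨f, hf1, hf2⟩
      refine Subtype.ext (funext fun C => ?_)
      dsimp only
      by_cases h : C = A
      · subst h; rw [dif_pos rfl, hf1]
      · by_cases h' : C = B
        · subst h'; rw [dif_neg h, dif_pos rfl, hf2]
        · rw [dif_neg h, dif_neg h']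
    · intro g
      funext C
      dsimp only
      rw [dif_neg C.2.1, dif_neg C.2.2]
  have hcompl : Nat.card {C : ↥K // C ≠ A ∧ C ≠ B} = Nat.card ↥K - 2 := by
    have e3 : {C : ↥K // C ≠ A ∧ C ≠ B} ≃ ↥(({A, B} : Set ↥K)ᶜ) :=
      Equiv.subtypeEquivRight (fun C => by
        simp [Set.mem_compl_iff, Set.mem_insert_iff, Set.mem_singleton_iff, not_or])
    rw [Nat.card_congr e3, Nat.card_coe_set_eq]
    have hsum := Set.ncard_add_ncard_compl ({A, B} : Set ↥K) (Set.toFinite _) (Set.toFinite _)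
    rw [Set.ncard_pair hAB] at hsum
    exact Nat.eq_sub_of_add_eq' hsum
  have hk : kDelta Δ η = Nat.card ↥K := (Nat.card_coe_set_eq K).symm
  calc Set.ncard S = Nat.card ↥S := (Nat.card_coe_set_eq S).symm
    _ = Nat.card {f : ↥K → Bool // f A = j ∧ f B = i} := main
    _ = Nat.card ({C : ↥K // C ≠ A ∧ C ≠ B} → Bool) := Nat.card_congr e2
    _ = Nat.card Bool ^ Nat.card {C : ↥K // C ≠ A ∧ C ≠ B} := Nat.card_fun
    _ = 2 ^ (kDelta Δ η - 2) := by rw [Nat.card_eq_fintype_card (α := Bool), Fintype.card_bool,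
          hcompl, hk]


end SixVertex
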